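/- Let k, n be positive natural numbers and let λ, x ∈ ℝ satisfy |λ·k·x^k| < 1 and 1 + λ·k·x^k > 0. Then the exponential series for exp(−λ x^{k+1} ∂_x) applied to x^n converges and ∑_{m=0}^∞ ((−λ)^m / m!) · (∏_{i=0}^{m−1} (n + i·k)) · x^{n + m·k} = x^n · (1 + λ·k·x^k)^{−n/k}, where the right-hand side uses the real power (rpow) with exponent −n/k. -/

import Mathlib

open Finset Filter Topology

namespace ExpSeriesAux

noncomputable def b (r : ℝ) (m : ℕ) : ℝ := (∏ i ∈ Finset.range m, (r + i)) / m.factorial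

noncomputable def c (r : ℝ) (m : ℕ) : ℝ := (-1) ^ m * b r m

lemma b_pos {r : ℝ} (hr : 0 < r) (m : ℕ) : 0 < b r m := by
  apply div_pos
  · exact Finset.prod_pos fun i _ => by positivity
  · exact_mod_cast m.factorial_pos

lemma b_succ (r : ℝ) (m : ℕ) : b r (m + 1) = b r m * ((r + m) / (m + 1)) := by
  unfold b
  rw [Finset.prod_range_succ, Nat.factorial_succ]
  have h1 : ((m : ℝ) + 1) ≠ 0 := by positivity
  have h2 : ((m.factorial : ℝ)) ≠ 0 := by exact_mod_cast m.factorial_pos.ne'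
  push_cast
  rw [div_mul_div_comm, mul_comm ((m:ℝ)+1)]

lemma c_succ (r : ℝ) (m : ℕ) : c r (m + 1) = c r m * (-(r + m) / (m + 1)) := by
  unfold c; rw [b_succ, pow_succ]; ring

lemma abs_c {r : ℝ} (hr : 0 < r) (m : ℕ) : |c r m| = b r m := by
  unfold c
  rw [abs_mul, abs_pow, abs_neg, abs_one, one_pow, one_mul, abs_of_pos (b_pos hr m)]

lemma tendsto_aux (s ρ : ℝ) :
    Tendsto (fun m : ℕ => (1 + s * (1 / ((m : ℝ) + 1))) * ρ) atTop (𝓝 ρ) := by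
  have h := tendsto_one_div_add_atTop_nhds_zero_nat (𝕜 := ℝ)
  have := ((tendsto_const_nhds (x := (1:ℝ))).add ((tendsto_const_nhds (x := s)).mul h)).mul
    (tendsto_const_nhds (x := ρ))
  simpa using this

lemma summable_b {r ρ : ℝ} (hr : 0 < r) (hρ0 : 0 < ρ) (hρ1 : ρ < 1) :
    Summable fun m : ℕ => b r m * ρ ^ m := by
  apply summable_of_ratio_test_tendsto_lt_one hρ1
  · exact Filter.Eventually.of_forall fun m =>
      (mul_pos (b_pos hr m) (pow_pos hρ0 m)).ne'
  · have key : (fun m : ℕ => ‖b r (m + 1) * ρ ^ (m + 1)‖ / ‖b r m * ρ ^ m‖)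
        = fun m : ℕ => (1 + (r - 1) * (1 / ((m : ℝ) + 1))) * ρ := by
      funext m
      have hb := b_pos hr m
      have hb' := b_pos hr (m + 1)
      rw [Real.norm_eq_abs, Real.norm_eq_abs,
        abs_of_pos (mul_pos hb' (pow_pos hρ0 _)),
        abs_of_pos (mul_pos hb (pow_pos hρ0 _)), b_succ, pow_succ]
      have h1 : ((m : ℝ) + 1) ≠ 0 := by positivity
      have h2 : (r + m) / (m+1) = 1 + (r-1) * (1/((m:ℝ)+1)) := by field_simp; ring
      field_simp
      ring
    rw [key]
    exact tendsto_aux _ _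

lemma summable_db {r ρ : ℝ} (hr : 0 < r) (hρ0 : 0 < ρ) (hρ1 : ρ < 1) :
    Summable fun m : ℕ => ((m : ℝ) + 1) * b r (m + 1) * ρ ^ m := by
  apply summable_of_ratio_test_tendsto_lt_one hρ1
  · refine Filter.Eventually.of_forall fun m => ?_
    exact (mul_pos (mul_pos (by positivity) (b_pos hr (m + 1))) (pow_pos hρ0 m)).ne'
  · have key : (fun m : ℕ => ‖((m:ℝ) + 1 + 1) * b r (m + 1 + 1) * ρ ^ (m + 1)‖ /
        ‖((m:ℝ) + 1) * b r (m + 1) * ρ ^ m‖)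
        = fun m : ℕ => (1 + r * (1 / ((m : ℝ) + 1))) * ρ := by
      funext m
      have hb := b_pos hr (m + 1)
      have hb' := b_pos hr (m + 1 + 1)
      rw [Real.norm_eq_abs, Real.norm_eq_abs,
        abs_of_pos (mul_pos (mul_pos (by positivity) hb') (pow_pos hρ0 _)),
        abs_of_pos (mul_pos (mul_pos (by positivity) hb) (pow_pos hρ0 _)),
        b_succ r (m+1), pow_succ]
      have h1 : ((m : ℝ) + 1) ≠ 0 := by positivity
      have h2 : ((m : ℝ) + 1 + 1) ≠ 0 := by positivity
      push_cast
      field_simp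
      ring
    push_cast
    rw [key]
    exact tendsto_aux _ _


lemma hasSum_binomial {r z : ℝ} (hr : 0 < r) (hz : |z| < 1) :
    HasSum (fun m : ℕ => c r m * z ^ m) ((1 + z) ^ (-r)) := by
  set ρ : ℝ := (|z| + 1) / 2 with hρdef
  have hρ0 : 0 < ρ := by positivity
  have hzρ : |z| < ρ := by rw [hρdef]; linarith
  have hρ1 : ρ < 1 := by rw [hρdef]; linarith
  set t : Set ℝ := Set.Ioo (-ρ) ρ with htdef
  have ht : IsOpen t := isOpen_Ioo
  have h't : IsPreconnected t := isPreconnected_Ioo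
  have h0t : (0 : ℝ) ∈ t := by constructor <;> [linarith; exact hρ0]
  have hmem : ∀ y : ℝ, y ∈ t → |y| ≤ ρ := by
    intro y hy
    exact abs_le.2 ⟨le_of_lt (by exact hy.1), le_of_lt hy.2⟩
  have hzt : z ∈ t := by
    constructor
    · linarith [neg_abs_le z]
    · linarith [le_abs_self z]
  -- summability of the series at any point of t
  have hS : ∀ y : ℝ, |y| ≤ ρ → Summable fun m : ℕ => c r m * y ^ m := by
    intro y hy
    apply Summable.of_norm_bounded (summable_b hr hρ0 hρ1)
    intro m
    rw [Real.norm_eq_abs, abs_mul, abs_c hr, abs_pow]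
    exact mul_le_mul_of_nonneg_left (pow_le_pow_left₀ (abs_nonneg y) hy m)
      (le_of_lt (b_pos hr m))
  -- bound for derivatives
  set u : ℕ → ℝ := fun m => (m : ℝ) * b r m * ρ ^ (m - 1) with hudef
  have hu : Summable u := by
    rw [← summable_nat_add_iff 1]
    have := summable_db hr hρ0 hρ1
    apply this.congr
    intro m
    simp [hudef]
  set g : ℕ → ℝ → ℝ := fun m y => c r m * y ^ m with hgdef
  set g' : ℕ → ℝ → ℝ := fun m y => c r m * ((m : ℝ) * y ^ (m - 1)) with hg'def
  have hg : ∀ m : ℕ, ∀ y ∈ t, HasDerivAt (g m) (g' m y) y := by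
    intro m y _
    exact (hasDerivAt_pow m y).const_mul (c r m)
  have hg' : ∀ m : ℕ, ∀ y ∈ t, ‖g' m y‖ ≤ u m := by
    intro m y hy
    rw [hg'def]
    simp only [Real.norm_eq_abs, abs_mul, abs_c hr, Nat.abs_cast, abs_pow]
    rw [hudef]
    calc b r m * ((m : ℝ) * |y| ^ (m - 1))
        ≤ b r m * ((m : ℝ) * ρ ^ (m - 1)) := by
          apply mul_le_mul_of_nonneg_left _ (le_of_lt (b_pos hr m))
          exact mul_le_mul_of_nonneg_left
            (pow_le_pow_left₀ (abs_nonneg y) (hmem y hy) _) (Nat.cast_nonneg m)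
      _ = (m : ℝ) * b r m * ρ ^ (m - 1) := by ring
  have hg0 : Summable fun m => g m 0 := hS 0 (by simpa using hρ0.le)
  -- the sum function and its derivative
  set f : ℝ → ℝ := fun y => ∑' m : ℕ, g m y with hfdef
  set D : ℝ → ℝ := fun y => ∑' m : ℕ, g' m y with hDdef
  have hderiv : ∀ y ∈ t, HasDerivAt f (D y) y := fun y hy =>
    hasDerivAt_tsum_of_isPreconnected hu ht h't hg hg' h0t hg0 hy
  -- the ODE
  have hODE : ∀ y ∈ t, D y * (1 + y) = -r * f y := by
    intro y hy
    have hSd : Summable fun m => g' m y :=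
      Summable.of_norm_bounded hu fun m => hg' m y hy
    have hA : HasSum (fun m => g' m y) (D y) := hSd.hasSum
    have hA1 : HasSum (fun m => g' (m + 1) y) (D y) := by
      have := (hasSum_nat_add_iff' (f := fun m => g' m y) 1).mpr hA
      simpa [hg'def] using this
    have hA2 : HasSum (fun m : ℕ => -(r + m) * (c r m * y ^ m)) (D y) := by
      have heq : (fun m : ℕ => -(r + (m : ℝ)) * (c r m * y ^ m))
          = fun m : ℕ => g' (m + 1) y := by
        funext m
        have h1 : ((m : ℝ) + 1) ≠ 0 := by positivity
        simp only [hg'def, c_succ, Nat.add_sub_cancel]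
        push_cast
        field_simp
      rw [heq]; exact hA1
    have hyA : HasSum (fun m : ℕ => (m : ℝ) * (c r m * y ^ m)) (D y * y) := by
      have h := hA.mul_right y
      have heq : (fun m : ℕ => g' m y * y)
          = fun m : ℕ => (m : ℝ) * (c r m * y ^ m) := by
        funext m
        cases m with
        | zero => simp [hg'def]
        | succ m =>
          simp only [hg'def, Nat.add_sub_cancel]
          push_cast
          rw [pow_succ]
          ring
      rwa [heq] at h
    have hfy : HasSum (fun m => g m y) (f y) := (hS y (hmem y hy)).hasSum
    have hcomb : HasSum (fun m : ℕ => -(r + m) * (c r m * y ^ m))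
        (-r * f y - D y * y) := by
      have h := (hfy.mul_left (-r)).sub hyA
      have heq : (fun m : ℕ => -r * g m y - (m : ℝ) * (c r m * y ^ m))
          = fun m : ℕ => -(r + m) * (c r m * y ^ m) := by
        funext m; simp only [hgdef]; ring
      rwa [heq] at h
    have huniq := hA2.unique hcomb
    linear_combination huniq
  -- the auxiliary function f y * (1+y)^r has zero derivative on t
  have hg'' : ∀ y ∈ t, HasDerivAt (fun w => f w * (1 + w) ^ r) 0 y := by
    intro y hy
    have h1y : (0 : ℝ) < 1 + y := by
      have := hy.1
      simp only [htdef, Set.mem_Ioo] at hy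
      linarith [hy.1, hρ1]
    have hR : HasDerivAt (fun w : ℝ => (1 + w) ^ r) (r * (1 + y) ^ (r - 1)) y := by
      have h := Real.hasDerivAt_rpow_const (x := 1 + y) (p := r) (Or.inl h1y.ne')
      have hid : HasDerivAt (fun w : ℝ => 1 + w) 1 y := by
        simpa using (hasDerivAt_id y).const_add (1 : ℝ)
      have h2 := h.comp y hid; rw [mul_one] at h2; exact h2
    have h := (hderiv y hy).mul hR
    have hval : D y * (1 + y) ^ r + f y * (r * (1 + y) ^ (r - 1)) = 0 := by
      have hsplit : (1 + y) ^ r = (1 + y) ^ (r - 1) * (1 + y) := by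
        nth_rewrite 1 [show r = (r - 1) + 1 by ring]
        rw [Real.rpow_add_one h1y.ne']
      rw [hsplit]
      have := hODE y hy
      linear_combination ((1 + y) ^ (r - 1)) * this
    rwa [hval] at h
  -- constancy
  have hconst : f z * (1 + z) ^ r = f 0 * (1 + 0 : ℝ) ^ r := by
    rcases le_or_gt 0 z with hz0 | hz0
    · have hsub : Set.Icc (0 : ℝ) z ⊆ t := by
        intro w hw
        constructor
        · linarith [hw.1]
        · have := hw.2; have := hzt.2; linarith
      have := constant_of_has_deriv_right_zero
        (f := fun w => f w * (1 + w) ^ r) (a := 0) (b := z)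
        (fun w hw => ((hg'' w (hsub hw)).continuousAt).continuousWithinAt)
        (fun w hw => ((hg'' w (hsub (Set.mem_Icc_of_Ico hw))).hasDerivWithinAt))
        z (Set.right_mem_Icc.2 hz0)
      simpa using this
    · have hsub : Set.Icc z (0 : ℝ) ⊆ t := by
        intro w hw
        constructor
        · have := hw.1; have := hzt.1; linarith
        · linarith [hw.2, hρ0]
      have := constant_of_has_deriv_right_zero
        (f := fun w => f w * (1 + w) ^ r) (a := z) (b := 0)
        (fun w hw => ((hg'' w (hsub hw)).continuousAt).continuousWithinAt)
        (fun w hw => ((hg'' w (hsub (Set.mem_Icc_of_Ico hw))).hasDerivWithinAt))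
        0 (Set.right_mem_Icc.2 hz0.le)
      simpa using this.symm
  have hf0 : f 0 = 1 := by
    rw [hfdef]
    simp only [hgdef]
    rw [tsum_eq_single 0 (fun m hm => by simp [zero_pow hm])]
    simp [c, b]
  have h1z : (0 : ℝ) < 1 + z := by
    have := abs_lt.1 hz
    linarith [this.1]
  have hfz : f z = (1 + z) ^ (-r) := by
    have hr1 : f z * (1 + z) ^ r = 1 := by
      rw [hconst, hf0]
      simp
    rw [Real.rpow_neg h1z.le]
    exact eq_inv_of_mul_eq_one_left hr1
  have := (hS z (hzρ.le)).hasSum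
  rw [hfdef] at hfz
  simp only [hgdef] at hfz this
  rwa [hfz] at this

end ExpSeriesAux

/-- The exponential series for `exp(-λ x^{k+1} ∂_x)` applied to `x^n` converges
and equals `x^n (1 + λ k x^k)^{-n/k}`. -/
theorem expSeries_omega_monomial (k n : ℕ) (hk : 0 < k) (hn : 0 < n)
    (lam x : ℝ) (habs : |lam * k * x ^ k| < 1) (hpos : 1 + lam * k * x ^ k > 0) :
    (Summable fun m : ℕ =>
        ((-lam) ^ m / m.factorial) *
          (∏ i ∈ Finset.range m, ((n : ℝ) + i * k)) * x ^ (n + m * k)) ∧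
      (∑' m : ℕ,
          ((-lam) ^ m / m.factorial) *
            (∏ i ∈ Finset.range m, ((n : ℝ) + i * k)) * x ^ (n + m * k))
        = x ^ n * (1 + lam * k * x ^ k) ^ (-(n : ℝ) / k) := by
  have hk' : (0 : ℝ) < k := by exact_mod_cast hk
  set r : ℝ := (n : ℝ) / (k : ℝ) with hrdef
  have hr : 0 < r := div_pos (by exact_mod_cast hn) hk'
  have hbs := ExpSeriesAux.hasSum_binomial hr habs
  have h2 := hbs.mul_left (x ^ n)
  have hkr : (k : ℝ) * r = n := by rw [hrdef]; field_simp
  have key : (fun m : ℕ => x ^ n * (ExpSeriesAux.c r m * (lam * k * x ^ k) ^ m))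
      = fun m : ℕ => ((-lam) ^ m / m.factorial) *
          (∏ i ∈ Finset.range m, ((n : ℝ) + i * k)) * x ^ (n + m * k) := by
    funext m
    have hprod : ∏ i ∈ Finset.range m, ((n : ℝ) + i * k)
        = (k : ℝ) ^ m * ∏ i ∈ Finset.range m, (r + i) := by
      calc ∏ i ∈ Finset.range m, ((n : ℝ) + i * k)
          = ∏ i ∈ Finset.range m, ((k : ℝ) * (r + i)) :=
            Finset.prod_congr rfl fun i _ => by rw [← hkr]; ring
        _ = (k : ℝ) ^ m * ∏ i ∈ Finset.range m, (r + i) := by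
            rw [Finset.prod_mul_distrib, Finset.prod_const, Finset.card_range]
    simp only [ExpSeriesAux.c, ExpSeriesAux.b]
    rw [hprod, pow_add, mul_comm m k, pow_mul, mul_pow, mul_pow, neg_pow]
    ring
  rw [key] at h2
  refine ⟨h2.summable, ?_⟩
  rw [h2.tsum_eq, hrdef, neg_div]
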